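/- Let x_1,…,x_n be a linear decomposition of a word x that is square-free relative to π, with complementary members p_i, q_i. Then for every i with 1 ≤ i < n, it is not the case that p_i·x_i·q_i ~ p_{i+1}·x_{i+1}·q_{i+1}. -/

import Mathlib

namespace SqFreePaper

variable {A : Type*}

/-- A word is square-free if it contains no nonempty factor of the form `s ++ s`. -/
def IsSquareFreeWord (w : List A) : Prop :=
  ∀ u s v : List A, w = u ++ s ++ s ++ v → s = []

/-- One-step rewriting relation associated with a system of defining relations `π`. -/
def OneStep (π : List A → List A → Prop) (x y : List A) : Prop :=
  ∃ r s u v : List A, x = r ++ u ++ s ∧ y = r ++ v ++ s ∧ (π u v ∨ π v u)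

/-- The congruence `=_π` generated by `π`: reflexive-transitive closure of one-step rewriting. -/
def EqRel (π : List A → List A → Prop) : List A → List A → Prop :=
  Relation.ReflTransGen (OneStep π)

/-- `w` is square-free relative to `π`: every word in its `=_π`-class is square-free. -/
def SFRel (π : List A → List A → Prop) (w : List A) : Prop :=
  ∀ z, EqRel π w z → IsSquareFreeWord z

/-- Union of two systems of defining relations. -/
def PiRel (σ ρ : List A → List A → Prop) (x y : List A) : Prop := σ x y ∨ ρ x y

/-- The set of defining words of a system `σ`. -/
def DWords (σ : List A → List A → Prop) : Set (List A) :=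
  {x | ∃ y, σ x y ∨ σ y x}

/-- The closure of `D_σ` under the congruence `=_ρ`. -/
def ClosureD (σ ρ : List A → List A → Prop) : Set (List A) :=
  {x | ∃ w ∈ DWords σ, EqRel ρ w x}

/-- The system `{(u_i, u_j) : i < j}` determined by a finite family of words. -/
def FamilyRel {n : ℕ} (u : Fin n → List A) (x y : List A) : Prop :=
  ∃ i j : Fin n, i < j ∧ x = u i ∧ y = u j

/-- `x ~ y` iff both lie in `D̄_σ` or both lie in `D̄_ρ`. -/
def Sim (σ ρ : List A → List A → Prop) (x y : List A) : Prop :=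
  (x ∈ ClosureD σ ρ ∧ y ∈ ClosureD σ ρ) ∨ (x ∈ ClosureD ρ σ ∧ y ∈ ClosureD ρ σ)

/-- `D_τ = D̄_σ ∪ D̄_ρ`. -/
def DTau (σ ρ : List A → List A → Prop) : Set (List A) :=
  ClosureD σ ρ ∪ ClosureD ρ σ

/-- The concatenation `x_a ++ x_{a+1} ++ ⋯ ++ x_{a+len-1}`. -/
def wordSeg (x : ℕ → List A) (a len : ℕ) : List A :=
  ((List.range' a len).map x).flatten

/-- Standing hypotheses of the paper: `D̄_σ`, `D̄_ρ` are finite, nonempty, disjoint,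
and closed under `=_σ`, `=_ρ` respectively. -/
def SettingHyps (σ ρ : List A → List A → Prop) : Prop :=
  (ClosureD σ ρ).Finite ∧ (ClosureD ρ σ).Finite ∧
  (ClosureD σ ρ).Nonempty ∧ (ClosureD ρ σ).Nonempty ∧
  (ClosureD σ ρ ∩ ClosureD ρ σ = ∅) ∧
  (∀ x ∈ ClosureD σ ρ, ∀ y, EqRel σ x y → y ∈ ClosureD σ ρ) ∧
  (∀ x ∈ ClosureD ρ σ, ∀ y, EqRel ρ x y → y ∈ ClosureD ρ σ)

/-- `x_1, …, x_n` (with complementary members `p_i`, `q_i`) is a linear decomposition. -/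
def IsLinDecomp (σ ρ : List A → List A → Prop) (n : ℕ) (x p q : ℕ → List A) : Prop :=
  1 ≤ n ∧
  (∀ i, 1 ≤ i → i ≤ n → x i ≠ []) ∧
  (∃ u v : ℕ → List A,
    (∀ i, 1 < i → i ≤ n → Sim σ ρ (p i ++ x i ++ q i) (q (i-1) ++ u i)) ∧
    (∀ i, 1 ≤ i → i < n → Sim σ ρ (p i ++ x i ++ q i) (v i ++ p (i+1)))) ∧
  (∀ i, 1 ≤ i → i < n → q i = [] ∨ p (i+1) = []) ∧
  p 1 = [] ∧ q n = [] ∧ (n = 1 → x 1 ∈ DTau σ ρ)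

/-- `Lin(n)`: words with a linear decomposition of at most `n` members. -/
def LinSet (σ ρ : List A → List A → Prop) (n : ℕ) : Set (List A) :=
  {w | ∃ m, 1 ≤ m ∧ m ≤ n ∧ ∃ x p q, IsLinDecomp σ ρ m x p q ∧ w = wordSeg x 1 m}

/-- `Lin = ⋃ₙ Lin(n)`: linearly decomposable words. -/
def LinAll (σ ρ : List A → List A → Prop) : Set (List A) :=
  {w | ∃ n, w ∈ LinSet σ ρ n}

/-- Occurrence `(r, d, s)` contains occurrence `(p, e, q)` (of the same word)
iff `|r| ≤ |p|` and `|s| ≤ |q|`. -/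
def Contained (p q r s : List A) : Prop := r.length ≤ p.length ∧ s.length ≤ q.length

/-- Two occurrences in `w` overlap iff some occurrence of a nonempty word is
contained in both. -/
def Overlap (w p q r s : List A) : Prop :=
  ∃ a f b : List A, f ≠ [] ∧ w = a ++ f ++ b ∧ Contained a b p q ∧ Contained a b r s

/-- `(p, e, q)` is a maximal occurrence in `w` of a word `e` in the set `L`. -/
def MaximalOcc (L : Set (List A)) (w p e q : List A) : Prop :=
  w = p ++ e ++ q ∧ e ∈ L ∧
  ∀ r d s, w = r ++ d ++ s → d ∈ L → Contained p q r s → r = p ∧ d = e ∧ s = q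

/-! ### Auxiliary lemmas -/

lemma oneStep_symm {π : List A → List A → Prop} {x y : List A}
    (h : OneStep π x y) : OneStep π y x := by
  obtain ⟨r, s, a, b, hx, hy, hab⟩ := h
  exact ⟨r, s, b, a, hy, hx, hab.symm⟩

lemma eqRel_symm {π : List A → List A → Prop} {x y : List A}
    (h : EqRel π x y) : EqRel π y x := by
  induction h with
  | refl => exact Relation.ReflTransGen.refl
  | tail _ h2 ih => exact Relation.ReflTransGen.head (oneStep_symm h2) ih

lemma eqRel_trans {π : List A → List A → Prop} {x y z : List A}
    (h : EqRel π x y) (h' : EqRel π y z) : EqRel π x z :=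
  Relation.ReflTransGen.trans h h'

lemma eqRel_mono {π π' : List A → List A → Prop} (hm : ∀ a b, π a b → π' a b)
    {x y : List A} (h : EqRel π x y) : EqRel π' x y := by
  induction h with
  | refl => exact Relation.ReflTransGen.refl
  | tail _ h2 ih =>
      obtain ⟨r, s, a, b, hx, hy, hab⟩ := h2
      exact Relation.ReflTransGen.tail ih
        ⟨r, s, a, b, hx, hy, hab.imp (hm _ _) (hm _ _)⟩

lemma oneStep_congr {π : List A → List A → Prop} (r s : List A) {x y : List A}
    (h : OneStep π x y) : OneStep π (r ++ x ++ s) (r ++ y ++ s) := by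
  obtain ⟨r', s', a, b, hx, hy, hab⟩ := h
  exact ⟨r ++ r', s' ++ s, a, b, by simp [hx, List.append_assoc],
    by simp [hy, List.append_assoc], hab⟩

/-- `=_π` is a congruence: rewriting may be performed inside any context. -/
lemma eqRel_congr {π : List A → List A → Prop} (r s : List A) {x y : List A}
    (h : EqRel π x y) : EqRel π (r ++ x ++ s) (r ++ y ++ s) := by
  induction h with
  | refl => exact Relation.ReflTransGen.refl
  | tail _ h2 ih => exact Relation.ReflTransGen.tail ih (oneStep_congr r s h2)

lemma eqRel_of_eq {π : List A → List A → Prop} {a b : List A} (h : a = b) :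
    EqRel π a b := h ▸ Relation.ReflTransGen.refl

lemma dwords_family {m : ℕ} {u : Fin m → List A} {w : List A}
    (h : w ∈ DWords (FamilyRel u)) : ∃ i, w = u i := by
  obtain ⟨y, h | h⟩ := h <;> obtain ⟨i, j, _, h1, h2⟩ := h
  exacts [⟨i, h1⟩, ⟨j, h2⟩]

lemma family_eqRel {m : ℕ} (u : Fin m → List A) (i j : Fin m) :
    EqRel (FamilyRel u) (u i) (u j) := by
  rcases lt_trichotomy i j with hij | hij | hij
  · exact Relation.ReflTransGen.single
      ⟨[], [], u i, u j, by simp, by simp, Or.inl ⟨i, j, hij, rfl, rfl⟩⟩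
  · rw [hij]; exact Relation.ReflTransGen.refl
  · exact Relation.ReflTransGen.single
      ⟨[], [], u i, u j, by simp, by simp, Or.inr ⟨j, i, hij, rfl, rfl⟩⟩

/-- Any two elements of the closure `D̄_σ` are `=_π`-equivalent, provided the
defining words of `σ` form a family (all pairwise related). -/
lemma closure_eqRel {σ ρ π : List A → List A → Prop} {m : ℕ} {u : Fin m → List A}
    (hσ : σ = FamilyRel u) (hπσ : ∀ a b, σ a b → π a b) (hπρ : ∀ a b, ρ a b → π a b)
    {z z' : List A} (hz : z ∈ ClosureD σ ρ) (hz' : z' ∈ ClosureD σ ρ) :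
    EqRel π z z' := by
  obtain ⟨w1, hw1, h1⟩ := hz
  obtain ⟨w2, hw2, h2⟩ := hz'
  subst hσ
  obtain ⟨a, rfl⟩ := dwords_family hw1
  obtain ⟨b, rfl⟩ := dwords_family hw2
  exact eqRel_trans (eqRel_symm (eqRel_mono hπρ h1))
    (eqRel_trans (eqRel_mono hπσ (family_eqRel u a b)) (eqRel_mono hπρ h2))

lemma wordSeg_succ_left (x : ℕ → List A) (a len : ℕ) :
    wordSeg x a (len + 1) = x a ++ wordSeg x (a + 1) len := by
  simp [wordSeg, List.range'_succ]

lemma wordSeg_one (x : ℕ → List A) (a : ℕ) : wordSeg x a 1 = x a := by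
  simp [wordSeg]

lemma wordSeg_append (x : ℕ → List A) (a m k : ℕ) :
    wordSeg x a (m + k) = wordSeg x a m ++ wordSeg x (a + m) k := by
  unfold wordSeg
  rw [show m + k = k + m from Nat.add_comm m k, Nat.add_comm k m, ← List.range'_append_1,
    List.map_append, List.flatten_append]

lemma wordSeg_succ_right (x : ℕ → List A) (a len : ℕ) :
    wordSeg x a (len + 1) = wordSeg x a len ++ x (a + len) := by
  rw [wordSeg_append, wordSeg_one]

/-- Lemma 3: in a linear decomposition of a word square-free relative
to `π`, consecutive members satisfy `¬(p_i·x_i·q_i ~ p_{i+1}·x_{i+1}·q_{i+1})`. -/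
theorem linDecomp_no_consecutive_sim {A : Type*} {nu nv : ℕ}
    (u : Fin nu → List A) (v : Fin nv → List A)
    (hu : Function.Injective u) (hv : Function.Injective v)
    (σ ρ : List A → List A → Prop) (hσ : σ = FamilyRel u) (hρ : ρ = FamilyRel v)
    (hset : SettingHyps σ ρ)
    (n : ℕ) (x p q : ℕ → List A) (hlin : IsLinDecomp σ ρ n x p q)
    (hsf : SFRel (PiRel σ ρ) (wordSeg x 1 n)) :
    ∀ i, 1 ≤ i → i < n →
      ¬ Sim σ ρ (p i ++ x i ++ q i) (p (i+1) ++ x (i+1) ++ q (i+1)) := by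
  intro i hi1 hin hsim
  obtain ⟨hn1, hne, ⟨u', v', hu', hv'⟩, hpq, hp1, hqn, -⟩ := hlin
  have hπσ : ∀ a b, σ a b → PiRel σ ρ a b := fun a b h => Or.inl h
  have hπρ : ∀ a b, ρ a b → PiRel σ ρ a b := fun a b h => Or.inr h
  have simEq : ∀ z z' : List A, Sim σ ρ z z' → EqRel (PiRel σ ρ) z z' := by
    intro z z' hzz
    rcases hzz with ⟨hz, hz'⟩ | ⟨hz, hz'⟩
    · exact closure_eqRel hσ hπσ hπρ hz hz'
    · exact closure_eqRel hρ hπρ hπσ hz hz'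
  -- downward induction: the tail of `w` is `=_π` to `x k ++ q k ++ W`
  have claimT : ∀ d k, 1 ≤ k → k + d = n →
      ∃ W, EqRel (PiRel σ ρ) (wordSeg x k (d + 1)) (x k ++ (q k ++ W)) := by
    intro d
    induction d with
    | zero =>
        intro k hk hkn
        have hkn' : k = n := by omega
        subst hkn'
        exact ⟨[], eqRel_of_eq (by rw [wordSeg_one, hqn]; simp)⟩
    | succ d ih =>
        intro k hk hkn
        obtain ⟨W', hW'⟩ := ih (k + 1) (by omega) (by omega)
        have h1 : EqRel (PiRel σ ρ) (wordSeg x k (d + 1 + 1))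
            (x k ++ (x (k + 1) ++ (q (k + 1) ++ W'))) := by
          rw [wordSeg_succ_left]
          have h2 := eqRel_congr (x k) [] hW'
          simpa using h2
        rcases hpq k hk (by omega) with hq | hp
        · exact ⟨x (k + 1) ++ (q (k + 1) ++ W'),
            eqRel_trans h1 (eqRel_of_eq (by simp [hq]))⟩
        · have hs := hu' (k + 1) (by omega) (by omega)
          rw [hp] at hs
          simp only [List.nil_append, Nat.add_sub_cancel] at hs
          have he := simEq _ _ hs
          refine ⟨u' (k + 1) ++ W', eqRel_trans h1 ?_⟩
          have h3 := eqRel_congr (x k) W' he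
          simpa [List.append_assoc] using h3
  -- upward induction: the head of `w` is `=_π` to `V ++ p k ++ x k`
  have claimS : ∀ d, d + 1 ≤ n →
      ∃ V, EqRel (PiRel σ ρ) (wordSeg x 1 (d + 1)) (V ++ (p (d + 1) ++ x (d + 1))) := by
    intro d
    induction d with
    | zero =>
        intro _
        exact ⟨[], eqRel_of_eq (by rw [wordSeg_one, hp1]; simp)⟩
    | succ d ih =>
        intro hdn
        obtain ⟨V, hV⟩ := ih (by omega)
        have h1 : EqRel (PiRel σ ρ) (wordSeg x 1 (d + 1 + 1))
            (V ++ (p (d + 1) ++ x (d + 1)) ++ x (d + 2)) := by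
          rw [wordSeg_succ_right, show 1 + (d + 1) = d + 2 from by omega]
          have h2 := eqRel_congr [] (x (d + 2)) hV
          simpa using h2
        rcases hpq (d + 1) (by omega) (by omega) with hq | hp2
        · have hs := hv' (d + 1) (by omega) (by omega)
          rw [hq] at hs
          simp only [List.append_nil] at hs
          have he := simEq _ _ hs
          refine ⟨V ++ v' (d + 1), eqRel_trans h1 ?_⟩
          have h3 := eqRel_congr V (x (d + 2)) he
          simpa [List.append_assoc] using h3
        · exact ⟨V ++ (p (d + 1) ++ x (d + 1)),
            eqRel_trans h1 (eqRel_of_eq (by simp [hp2, List.append_assoc]))⟩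
  obtain ⟨V, hV⟩ := claimS (i - 1) (by omega)
  obtain ⟨W, hW⟩ := claimT (n - (i + 1)) (i + 1) (by omega) (by omega)
  rw [show i - 1 + 1 = i from by omega] at hV
  rw [show n - (i + 1) + 1 = n - i from by omega] at hW
  have hsplit : wordSeg x 1 n = wordSeg x 1 i ++ wordSeg x (i + 1) (n - i) := by
    have h := wordSeg_append x 1 i (n - i)
    rw [show i + (n - i) = n from by omega, show 1 + i = i + 1 from by omega] at h
    exact h
  have hw1 : EqRel (PiRel σ ρ) (wordSeg x 1 n)
      (V ++ (p i ++ x i) ++ (x (i + 1) ++ (q (i + 1) ++ W))) := by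
    rw [hsplit]
    have h2 := eqRel_congr [] (wordSeg x (i + 1) (n - i)) hV
    have h3 := eqRel_congr (V ++ (p i ++ x i)) [] hW
    simp only [List.nil_append, List.append_nil] at h2 h3
    exact eqRel_trans h2 h3
  have hEq := simEq _ _ hsim
  rcases hpq i hi1 hin with hq | hp2
  · -- `q i = []`: rewrite `p i ++ x i` into `p (i+1) ++ x (i+1) ++ q (i+1)`
    have hstep := eqRel_congr V (x (i + 1) ++ (q (i + 1) ++ W)) hEq
    have hz : EqRel (PiRel σ ρ) (wordSeg x 1 n)
        ((V ++ p (i + 1)) ++ (x (i + 1) ++ q (i + 1)) ++ (x (i + 1) ++ q (i + 1)) ++ W) := by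
      refine eqRel_trans hw1 (eqRel_trans (eqRel_of_eq ?_)
        (eqRel_trans hstep (eqRel_of_eq ?_)))
      · simp [hq, List.append_assoc]
      · simp [List.append_assoc]
    have hsq := hsf _ hz (V ++ p (i + 1)) (x (i + 1) ++ q (i + 1)) W rfl
    have hx1 := hne (i + 1) (by omega) (by omega)
    rcases List.append_eq_nil_iff.mp hsq with ⟨h4, -⟩
    exact hx1 h4
  · -- `p (i+1) = []`: rewrite `x (i+1) ++ q (i+1)` into `p i ++ x i ++ q i`
    have hstep := eqRel_congr (V ++ (p i ++ x i)) W (eqRel_symm hEq)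
    have hz : EqRel (PiRel σ ρ) (wordSeg x 1 n)
        (V ++ (p i ++ x i) ++ (p i ++ x i) ++ (q i ++ W)) := by
      refine eqRel_trans hw1 (eqRel_trans (eqRel_of_eq ?_)
        (eqRel_trans hstep (eqRel_of_eq ?_)))
      · simp [hp2, List.append_assoc]
      · simp [List.append_assoc]
    have hsq := hsf _ hz V (p i ++ x i) (q i ++ W) rfl
    have hx1 := hne i (by omega) (by omega)
    rcases List.append_eq_nil_iff.mp hsq with ⟨-, h4⟩
    exact hx1 h4
end SqFreePaper
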